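/- Let G be a finite nonabelian simple group. Then G has a minimal solvabilizer covering consisting of elements of prime order; that is, there exists a set X ⊆ G \ {1} with G = ∪_{x∈X} Sol_G(x), with |X| equal to the solvabilizer number α(G), and such that every element of X has prime order. -/

import Mathlib

open scoped MatrixGroups

/-- The solvabilizer of `x` in `G`:
`Sol_G(x) = {y : the subgroup generated by x and y is solvable}`. -/
def Sol {G : Type*} [Group G] (x : G) : Set G :=
  {y | IsSolvable ↥(Subgroup.closure ({x, y} : Set G))}

/-- The solvabilizer number `α(G)`: the minimum cardinality of a set `X` of elements lying
outside the solvable radical (equivalently, outside every solvable normal subgroup)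
whose solvabilizers cover `G`. -/
noncomputable def solvNumber (G : Type*) [Group G] : ℕ :=
  sInf {n : ℕ | ∃ X : Finset G,
    (∀ x ∈ X, ¬∃ N : Subgroup G, N.Normal ∧ IsSolvable ↥N ∧ x ∈ N) ∧
    X.card = n ∧ ∀ g : G, ∃ x ∈ X, g ∈ Sol x}

section Aux

variable {G : Type*} [Group G]

/-- If a set is contained in the cyclic subgroup generated by an element, its closure is
solvable. -/
lemma solvable_closure_of_subset_zpowers {x : G} {s : Set G}
    (h : s ⊆ (Subgroup.zpowers x : Set G)) : IsSolvable ↥(Subgroup.closure s) := by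
  have hle : Subgroup.closure s ≤ Subgroup.zpowers x := (Subgroup.closure_le _).mpr h
  haveI : Group.IsSolvable ↥(Subgroup.zpowers x) := isSolvable_of_comm (fun a b => by
    obtain ⟨_, i, rfl⟩ := a; obtain ⟨_, j, rfl⟩ := b; exact Subtype.ext (zpow_mul_comm x i j))
  exact solvable_of_solvable_injective (Subgroup.inclusion_injective hle)

/-- Solvabilizers are antitone in powers: `Sol x ⊆ Sol (x ^ n)`. -/
lemma sol_pow {x g : G} (n : ℕ) (hg : g ∈ Sol x) : g ∈ Sol (x ^ n) := by
  have h1 : x ∈ Subgroup.closure ({x, g} : Set G) :=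
    Subgroup.subset_closure (Set.mem_insert _ _)
  have h2 : g ∈ Subgroup.closure ({x, g} : Set G) :=
    Subgroup.subset_closure (Set.mem_insert_iff.mpr (Or.inr rfl))
  have hle : Subgroup.closure ({x ^ n, g} : Set G) ≤ Subgroup.closure ({x, g} : Set G) := by
    refine (Subgroup.closure_le _).mpr ?_
    intro y hy
    rcases hy with hy | hy
    · subst hy; exact pow_mem h1 n
    · simp only [Set.mem_singleton_iff] at hy; subst hy; exact h2
  have : Group.IsSolvable ↥(Subgroup.closure ({x, g} : Set G)) := hg
  exact solvable_of_solvable_injective (Subgroup.inclusion_injective hle)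

/-- In a nonabelian simple group, no nontrivial element lies in a solvable normal subgroup. -/
lemma not_mem_normal_solvable [IsSimpleGroup G] (hnab : ∃ a b : G, a * b ≠ b * a)
    {x : G} (hx : x ≠ 1) : ¬∃ N : Subgroup G, N.Normal ∧ IsSolvable ↥N ∧ x ∈ N := by
  rintro ⟨N, hN, hS, hxN⟩
  rcases hN.eq_bot_or_eq_top with h | h
  · subst h; exact hx (Subgroup.mem_bot.mp hxN)
  · subst h
    haveI : Group.IsSolvable ↥(⊤ : Subgroup G) := hS
    have : IsSolvable G :=
      solvable_of_surjective (f := (Subgroup.topEquiv (G := G)).toMonoidHom)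
        (fun y => ⟨⟨y, trivial⟩, rfl⟩)
    obtain ⟨a, b, hab⟩ := hnab
    exact hab (IsSimpleGroup.comm_iff_isSolvable.mpr this a b)

end Aux

/-- A finite nonabelian simple group has a minimal solvabilizer covering consisting of
elements of prime order. -/
theorem stmt4 {G : Type*} [Group G] [Finite G] [IsSimpleGroup G]
    (hnab : ∃ a b : G, a * b ≠ b * a) :
    ∃ X : Finset G, (∀ x ∈ X, x ≠ 1) ∧ (∀ g : G, ∃ x ∈ X, g ∈ Sol x) ∧
      X.card = solvNumber G ∧ ∀ x ∈ X, (orderOf x).Prime := by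
  classical
  letI : Fintype G := Fintype.ofFinite G
  set S : Set ℕ := {n : ℕ | ∃ X : Finset G,
    (∀ x ∈ X, ¬∃ N : Subgroup G, N.Normal ∧ IsSolvable ↥N ∧ x ∈ N) ∧
    X.card = n ∧ ∀ g : G, ∃ x ∈ X, g ∈ Sol x} with hS
  -- the defining set is nonempty
  obtain ⟨a, b, hab⟩ := hnab
  have ha1 : a ≠ 1 := by rintro rfl; simp at hab
  have hne : S.Nonempty := by
    refine ⟨(Finset.univ.erase (1 : G)).card, Finset.univ.erase 1, ?_, rfl, ?_⟩
    · intro x hx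
      exact not_mem_normal_solvable ⟨a, b, hab⟩ (Finset.ne_of_mem_erase hx)
    · intro g
      by_cases hg : g = 1
      · subst hg
        refine ⟨a, Finset.mem_erase.mpr ⟨ha1, Finset.mem_univ _⟩, ?_⟩
        refine solvable_closure_of_subset_zpowers (x := a) ?_
        rintro y (hy | hy)
        · rw [hy]; exact Subgroup.mem_zpowers a
        · simp only [Set.mem_singleton_iff] at hy; rw [hy]; exact one_mem _
      · refine ⟨g, Finset.mem_erase.mpr ⟨hg, Finset.mem_univ _⟩, ?_⟩
        refine solvable_closure_of_subset_zpowers (x := g) ?_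
        rintro y (hy | hy)
        · rw [hy]; exact Subgroup.mem_zpowers g
        · simp only [Set.mem_singleton_iff] at hy; rw [hy]; exact Subgroup.mem_zpowers g
  have hmem : solvNumber G ∈ S := Nat.sInf_mem hne
  obtain ⟨X, hX1, hXcard, hXcov⟩ := hmem
  -- replace each element by a prime-order power
  have hXne1 : ∀ x ∈ X, x ≠ 1 := by
    intro x hx hx1
    exact hX1 x hx ⟨⊥, inferInstance, (inferInstance : Group.IsSolvable _), by simp [hx1]⟩
  -- the replacement function
  let f : G → G := fun x =>
    if h : orderOf x ≠ 1 then x ^ (orderOf x / (Nat.exists_prime_and_dvd h).choose) else x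
  have hf : ∀ x : G, x ≠ 1 → (orderOf (f x)).Prime ∧ ∃ n : ℕ, f x = x ^ n := by
    intro x hx
    have hord : orderOf x ≠ 1 := fun h => hx (orderOf_eq_one_iff.mp h)
    have hpos : orderOf x ≠ 0 := (orderOf_pos x).ne'
    obtain ⟨hp, hdvd⟩ := (Nat.exists_prime_and_dvd hord).choose_spec
    set p := (Nat.exists_prime_and_dvd hord).choose with hpdef
    have hfx : f x = x ^ (orderOf x / p) := by simp only [f, dif_pos hord]; rfl
    constructor
    · rw [hfx, orderOf_pow,
        Nat.gcd_eq_right (Nat.div_dvd_of_dvd hdvd), Nat.div_div_self hdvd hpos]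
      exact hp
    · exact ⟨orderOf x / p, hfx⟩
  set X' : Finset G := X.image f with hX'
  have hX'prime : ∀ y ∈ X', (orderOf y).Prime := by
    intro y hy
    obtain ⟨x, hx, rfl⟩ := Finset.mem_image.mp hy
    exact (hf x (hXne1 x hx)).1
  have hX'ne1 : ∀ y ∈ X', y ≠ 1 := by
    intro y hy hy1
    have := hX'prime y hy
    rw [hy1, orderOf_one] at this
    exact this.ne_one rfl
  have hX'cov : ∀ g : G, ∃ y ∈ X', g ∈ Sol y := by
    intro g
    obtain ⟨x, hx, hg⟩ := hXcov g
    obtain ⟨n, hn⟩ := (hf x (hXne1 x hx)).2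
    refine ⟨f x, Finset.mem_image_of_mem f hx, ?_⟩
    rw [hn]
    exact sol_pow n hg
  have hX'S : X'.card ∈ S := by
    refine ⟨X', fun y hy => not_mem_normal_solvable ⟨a, b, hab⟩ (hX'ne1 y hy), rfl, hX'cov⟩
  have hcard : X'.card = solvNumber G := by
    have h1 : solvNumber G ≤ X'.card := Nat.sInf_le hX'S
    have h2 : X'.card ≤ X.card := Finset.card_image_le
    omega
  exact ⟨X', hX'ne1, hX'cov, hcard, hX'prime⟩
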